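/- (Lemma 4.) Let s ≥ 1 and let B ∈ ℝ^{n×m} satisfy the RIP with constant δ_{2s} < √2 − 1; set α = 2√(1 + δ_{2s})/(1 − δ_{2s}) and ρ = √2·δ_{2s}/(1 − δ_{2s}) (so that ρ < 1). Let ū_0,…,ū_{K−1}, u*_0,…,u*_{K−1} ∈ ℝ^m with each ū_k s-sparse and ∑_{k=0}^{K−1}‖u*_k‖₁ ≤ ∑_{k=0}^{K−1}‖ū_k‖₁. Set h_k = u*_k − ū_k and T0(k) = supp(ū_k); for each k assume |T0(k)^c| ≥ s and let T1(k) ⊆ T0(k)^c be a set of exactly s indices such that |(h_k)_i| ≥ |(h_k)_j| for every i ∈ T1(k) and every j ∈ T0(k)^c ∖ T1(k). Suppose moreover that ‖B h_k‖₂ ≤ 2cε for every k = 0,…,K−1, where c ≥ 0 and ε ≥ 0. Then ∑_{k=0}^{K−1} ‖(h_k)_{T0(k)∪T1(k)}‖₂ ≤ K(1 − ρ)^{−1} α c ε. -/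

import Mathlib

open Matrix Finset

noncomputable def l2norm {k : ℕ} (x : Fin k → ℝ) : ℝ := Real.sqrt (∑ i, (x i) ^ 2)

def l1norm {k : ℕ} (x : Fin k → ℝ) : ℝ := ∑ i, |x i|

def Sparse {k : ℕ} (s : ℕ) (x : Fin k → ℝ) : Prop :=
  (Finset.univ.filter fun i => x i ≠ 0).card ≤ s

def RIP {n m : ℕ} (s : ℕ) (δ : ℝ) (Φ : Matrix (Fin n) (Fin m) ℝ) : Prop :=
  ∀ c : Fin m → ℝ, Sparse s c →
    (1 - δ) * (l2norm c) ^ 2 ≤ (l2norm (Φ.mulVec c)) ^ 2 ∧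
    (l2norm (Φ.mulVec c)) ^ 2 ≤ (1 + δ) * (l2norm c) ^ 2

noncomputable def support {k : ℕ} (x : Fin k → ℝ) : Finset (Fin k) :=
  Finset.univ.filter fun i => x i ≠ 0

def restrict {k : ℕ} (T : Finset (Fin k)) (x : Fin k → ℝ) : Fin k → ℝ :=
  fun i => if i ∈ T then x i else 0

namespace S7
noncomputable def ip {k : ℕ} (x y : Fin k → ℝ) : ℝ := ∑ i, x i * y i

lemma l2_nonneg {k} (x : Fin k → ℝ) : 0 ≤ l2norm x := Real.sqrt_nonneg _

lemma l2_sq {k} (x : Fin k → ℝ) : (l2norm x)^2 = ∑ i, (x i)^2 :=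
  Real.sq_sqrt (by positivity)

lemma l1_nonneg {k} (x : Fin k → ℝ) : 0 ≤ l1norm x :=
  Finset.sum_nonneg fun i _ => abs_nonneg _

lemma le_of_sq_le_sq {a b : ℝ} (ha : 0 ≤ a) (hb : 0 ≤ b) (h : a^2 ≤ b^2) : a ≤ b := by
  nlinarith

lemma ip_le {k} (x y : Fin k → ℝ) : ip x y ≤ l2norm x * l2norm y := by
  have h := Finset.sum_mul_sq_le_sq_mul_sq Finset.univ x y
  have h2 : (ip x y)^2 ≤ (l2norm x * l2norm y)^2 := by
    rw [mul_pow, l2_sq, l2_sq]; exact h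
  calc ip x y ≤ |ip x y| := le_abs_self _
    _ = Real.sqrt ((ip x y)^2) := (Real.sqrt_sq_eq_abs _).symm
    _ ≤ Real.sqrt ((l2norm x * l2norm y)^2) := Real.sqrt_le_sqrt h2
    _ = l2norm x * l2norm y := Real.sqrt_sq (mul_nonneg (l2_nonneg x) (l2_nonneg y))

lemma mem_support_iff {k} {x : Fin k → ℝ} {i : Fin k} : i ∈ support x ↔ x i ≠ 0 := by
  simp [support]

lemma sparse_of_supp_subset {k s} {x : Fin k → ℝ} {T : Finset (Fin k)}
    (h : support x ⊆ T) (hT : T.card ≤ s) : Sparse s x :=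
  le_trans (Finset.card_le_card h) hT

lemma supp_restrict {k} (T : Finset (Fin k)) (x : Fin k → ℝ) :
    support (_root_.restrict T x) ⊆ T := by
  intro i hi
  rw [mem_support_iff] at hi
  by_contra h
  simp [_root_.restrict, h] at hi

lemma l2_sq_le_card_mul {k s : ℕ} (y : Fin k → ℝ) (t : ℝ) (ht : 0 ≤ t)
    (hsupp : (support y).card ≤ s) (hb : ∀ i, |y i| ≤ t) :
    (l2norm y)^2 ≤ (s : ℝ) * t^2 := by
  rw [l2_sq]
  have h1 : ∑ i, (y i)^2 = ∑ i ∈ support y, (y i)^2 := by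
    refine (Finset.sum_subset (Finset.subset_univ _) ?_).symm
    intro i _ hi
    rw [mem_support_iff, not_not] at hi
    simp [hi]
  rw [h1]
  calc ∑ i ∈ support y, (y i)^2 ≤ ∑ _i ∈ support y, t^2 := by
        refine Finset.sum_le_sum fun i _ => ?_
        rw [← sq_abs]
        exact pow_le_pow_left₀ (abs_nonneg _) (hb i) 2
    _ = ((support y).card : ℝ) * t^2 := by rw [Finset.sum_const, nsmul_eq_mul]
    _ ≤ (s : ℝ) * t^2 := by
        apply mul_le_mul_of_nonneg_right _ (sq_nonneg t)
        exact_mod_cast hsupp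

lemma l2_le_sqrt_mul {k s : ℕ} (y : Fin k → ℝ) (t : ℝ) (ht : 0 ≤ t)
    (hsupp : (support y).card ≤ s) (hb : ∀ i, |y i| ≤ t) :
    l2norm y ≤ Real.sqrt s * t := by
  apply le_of_sq_le_sq (l2_nonneg y) (by positivity)
  rw [mul_pow, Real.sq_sqrt (Nat.cast_nonneg s)]
  exact l2_sq_le_card_mul y t ht hsupp hb


lemma l2_eq_zero {k} {x : Fin k → ℝ} (h : l2norm x = 0) : x = 0 := by
  have h2 : ∑ i, (x i)^2 = 0 := by
    have := l2_sq x; rw [h] at this; simpa using this.symm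
  funext i
  have := (Finset.sum_eq_zero_iff_of_nonneg (fun j _ => sq_nonneg (x j))).mp h2 i (Finset.mem_univ i)
  exact pow_eq_zero_iff (by norm_num) |>.mp this

lemma sum_mul_eq_zero_of_disj {k} {x z : Fin k → ℝ} (hd : ∀ i, x i = 0 ∨ z i = 0) :
    ∑ i, x i * z i = 0 :=
  Finset.sum_eq_zero fun i _ => by rcases hd i with h | h <;> simp [h]

/-- Restricted orthogonality. -/
lemma ro {n m s : ℕ} {B : Matrix (Fin n) (Fin m) ℝ} {δ : ℝ}
    (hB : RIP (2 * s) δ B) {x z : Fin m → ℝ}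
    (hx : Sparse s x) (hz : Sparse s z) (hd : ∀ i, x i = 0 ∨ z i = 0) :
    ip (B.mulVec x) (B.mulVec z) ≤ δ * l2norm x * l2norm z := by
  rcases eq_or_ne x 0 with rfl | hx0
  · simp [ip, Matrix.mulVec_zero, l2norm]
  rcases eq_or_ne z 0 with rfl | hz0
  · simp [ip, Matrix.mulVec_zero, l2norm]
  set a := l2norm z with ha
  set b := l2norm x with hb
  have ha0 : 0 < a := lt_of_le_of_ne (l2_nonneg z) (fun h => hz0 (l2_eq_zero h.symm))
  have hb0 : 0 < b := lt_of_le_of_ne (l2_nonneg x) (fun h => hx0 (l2_eq_zero h.symm))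
  set u : Fin m → ℝ := a • x + b • z with hu
  set v : Fin m → ℝ := a • x - b • z with hv
  have hsupu : ∀ (w : Fin m → ℝ), (∀ i, w i ≠ 0 → x i ≠ 0 ∨ z i ≠ 0) → Sparse (2 * s) w := by
    intro w hw
    apply sparse_of_supp_subset (T := support x ∪ support z)
    · intro i hi
      rw [mem_support_iff] at hi
      rcases hw i hi with h | h <;> simp [Finset.mem_union, mem_support_iff, h]
    · calc (support x ∪ support z).card ≤ (support x).card + (support z).card :=
            Finset.card_union_le _ _
        _ ≤ s + s := add_le_add hx hz
        _ = 2 * s := (two_mul s).symm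
  have hus : Sparse (2 * s) u := by
    apply hsupu; intro i hi
    by_contra h
    push_neg at h
    simp [hu, h.1, h.2] at hi
  have hvs : Sparse (2 * s) v := by
    apply hsupu; intro i hi
    by_contra h
    push_neg at h
    simp [hv, h.1, h.2] at hi
  have key1 := (hB u hus).2
  have key2 := (hB v hvs).1
  -- norms of u and v
  have hxz : ∑ i, x i * z i = 0 := sum_mul_eq_zero_of_disj hd
  have hnu : (l2norm u)^2 = 2 * a^2 * b^2 := by
    rw [l2_sq]
    have : ∀ i, (u i)^2 = a^2 * (x i)^2 + b^2 * (z i)^2 + 2*a*b*(x i * z i) := by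
      intro i; simp only [hu, Pi.add_apply, Pi.smul_apply, smul_eq_mul]; ring
    simp_rw [this, Finset.sum_add_distrib, ← Finset.mul_sum, hxz, ← l2_sq, ← ha, ← hb]
    ring
  have hnv : (l2norm v)^2 = 2 * a^2 * b^2 := by
    rw [l2_sq]
    have : ∀ i, (v i)^2 = a^2 * (x i)^2 + b^2 * (z i)^2 - 2*a*b*(x i * z i) := by
      intro i; simp only [hv, Pi.sub_apply, Pi.smul_apply, smul_eq_mul]; ring
    simp_rw [this, Finset.sum_sub_distrib, Finset.sum_add_distrib, ← Finset.mul_sum, hxz,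
      ← l2_sq, ← ha, ← hb]
    ring
  -- B u and B v
  have hBu : B.mulVec u = a • B.mulVec x + b • B.mulVec z := by
    rw [hu, Matrix.mulVec_add, Matrix.mulVec_smul, Matrix.mulVec_smul]
  have hBv : B.mulVec v = a • B.mulVec x - b • B.mulVec z := by
    rw [hv, sub_eq_add_neg, Matrix.mulVec_add, Matrix.mulVec_smul, Matrix.mulVec_neg,
      Matrix.mulVec_smul, ← sub_eq_add_neg]
  have hdiff : (l2norm (B.mulVec u))^2 - (l2norm (B.mulVec v))^2
      = 4 * a * b * ip (B.mulVec x) (B.mulVec z) := by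
    rw [l2_sq, l2_sq, ip, ← Finset.sum_sub_distrib, Finset.mul_sum]
    apply Finset.sum_congr rfl
    intro i _
    rw [hBu, hBv]
    simp only [Pi.add_apply, Pi.sub_apply, Pi.smul_apply, smul_eq_mul]
    ring
  have hfinal : 4 * a * b * ip (B.mulVec x) (B.mulVec z) ≤ 4 * δ * a^2 * b^2 := by
    rw [← hdiff]
    have := sub_le_sub key1 key2
    rw [hnu, hnv] at this
    calc (l2norm (B.mulVec u))^2 - (l2norm (B.mulVec v))^2
        ≤ (1+δ) * (2*a^2*b^2) - (1-δ) * (2*a^2*b^2) := this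
      _ = 4 * δ * a^2 * b^2 := by ring
  have h4ab : 0 < 4 * a * b := by positivity
  rw [show δ * l2norm x * l2norm z = δ * b * a by rw [ha, hb]]
  nlinarith [hfinal, ha0, hb0]

/-- Top-s selection. -/
lemma exists_top {m : ℕ} (f : Fin m → ℝ) :
    ∀ (s : ℕ) (A : Finset (Fin m)), s ≤ A.card →
      ∃ S ⊆ A, S.card = s ∧ ∀ i ∈ S, ∀ j ∈ A \ S, f j ≤ f i := by
  intro s
  induction s with
  | zero => intro A _; exact ⟨∅, Finset.empty_subset _, Finset.card_empty, by simp⟩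
  | succ s ih =>
    intro A hA
    have hne : A.Nonempty := Finset.card_pos.mp (lt_of_lt_of_le (Nat.succ_pos s) hA)
    obtain ⟨a, haA, hamax⟩ := Finset.exists_max_image A f hne
    have hcard : s ≤ (A.erase a).card := by
      rw [Finset.card_erase_of_mem haA]; omega
    obtain ⟨S', hS'sub, hS'card, hS'max⟩ := ih (A.erase a) hcard
    have haS' : a ∉ S' := fun h => (Finset.ne_of_mem_erase (hS'sub h)) rfl
    refine ⟨insert a S', ?_, ?_, ?_⟩
    · intro i hi
      rcases Finset.mem_insert.mp hi with rfl | hi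
      · exact haA
      · exact Finset.mem_of_mem_erase (hS'sub hi)
    · rw [Finset.card_insert_of_notMem haS', hS'card]
    · intro i hi j hj
      rw [Finset.mem_sdiff] at hj
      rcases Finset.mem_insert.mp hi with rfl | hi
      · exact hamax j hj.1
      · apply hS'max i hi j
        rw [Finset.mem_sdiff, Finset.mem_erase]
        refine ⟨⟨fun h => hj.2 (h ▸ Finset.mem_insert_self a S'), hj.1⟩,
          fun h => hj.2 (Finset.mem_insert_of_mem h)⟩

/-- Sparse block decomposition. -/
lemma decomp {m : ℕ} (s : ℕ) (hs : 1 ≤ s) :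
    ∀ (N : ℕ) (y : Fin m → ℝ) (t : ℝ), (support y).card ≤ N → 0 ≤ t → (∀ i, |y i| ≤ t) →
    ∃ L : List (Fin m → ℝ),
      (∀ z ∈ L, Sparse s z ∧ ∀ i, z i ≠ 0 → y i ≠ 0) ∧ L.sum = y ∧
      (L.map l2norm).sum ≤ Real.sqrt s * t + (Real.sqrt s)⁻¹ * l1norm y := by
  intro N
  induction N with
  | zero =>
    intro y t hcard ht hb
    have hy : y = 0 := by
      funext i
      by_contra h
      have : i ∈ support y := mem_support_iff.mpr h
      have := Finset.card_pos.mpr ⟨i, this⟩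
      omega
    refine ⟨[], by simp, by simp [hy], ?_⟩
    simp only [List.map_nil, List.sum_nil]
    have : 0 ≤ l1norm y := l1_nonneg y
    positivity
  | succ N ih =>
    intro y t hcard ht hb
    by_cases hcs : (support y).card ≤ s
    · -- single block
      refine ⟨[y], ?_, by simp, ?_⟩
      · intro z hz
        rw [List.mem_singleton] at hz
        subst hz
        exact ⟨hcs, fun i h => h⟩
      · simp only [List.map_cons, List.map_nil, List.sum_cons, List.sum_nil, add_zero]
        have h1 := l2_le_sqrt_mul y t ht hcs hb
        have : 0 ≤ (Real.sqrt s)⁻¹ * l1norm y := by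
          have := l1_nonneg y; positivity
        linarith
    · push_neg at hcs
      obtain ⟨S, hSsub, hScard, hSmax⟩ :=
        exists_top (fun i => |y i|) s (support y) (le_of_lt hcs)
      have hSne : S.Nonempty := Finset.card_pos.mp (by omega)
      obtain ⟨a, haS, hamin⟩ := Finset.exists_min_image S (fun i => |y i|) hSne
      set t' := |y a| with ht'
      have ht'0 : 0 ≤ t' := abs_nonneg _
      set y1 : Fin m → ℝ := _root_.restrict S y with hy1
      set y2 : Fin m → ℝ := fun i => if i ∈ S then 0 else y i with hy2
      have hsplit : y = y1 + y2 := by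
        funext i
        by_cases h : i ∈ S <;> simp [hy1, hy2, _root_.restrict, h]
      have hsupp2 : support y2 = support y \ S := by
        ext i
        rw [mem_support_iff, Finset.mem_sdiff, mem_support_iff]
        by_cases h : i ∈ S <;> simp [hy2, h]
      have hcard2 : (support y2).card ≤ N := by
        rw [hsupp2, Finset.card_sdiff_of_subset hSsub, hScard]
        omega
      have hb2 : ∀ i, |y2 i| ≤ t' := by
        intro i
        by_cases h : i ∈ S
        · simp [hy2, h, ht'0]
        · by_cases h2 : y i = 0
          · simp [hy2, h, h2, ht'0]
          · have : i ∈ support y \ S := Finset.mem_sdiff.mpr ⟨mem_support_iff.mpr h2, h⟩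
            have := hSmax a haS i this
            simpa [hy2, h] using this
      obtain ⟨L2, hL2p, hL2sum, hL2bound⟩ := ih y2 t' hcard2 ht'0 hb2
      refine ⟨y1 :: L2, ?_, ?_, ?_⟩
      · intro z hz
        rcases List.mem_cons.mp hz with rfl | hz
        · refine ⟨sparse_of_supp_subset (supp_restrict S y) (le_of_eq hScard), ?_⟩
          intro i h
          by_contra h0
          simp [hy1, _root_.restrict, h0] at h
        · obtain ⟨h1, h2⟩ := hL2p z hz
          refine ⟨h1, fun i h => ?_⟩
          have := h2 i h
          by_contra h0
          simp [hy2, h0] at this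
      · rw [List.sum_cons, hL2sum, hsplit]
      · rw [List.map_cons, List.sum_cons]
        -- l2norm y1 ≤ √s * t
        have hby1 : ∀ i, |y1 i| ≤ t := by
          intro i
          by_cases h : i ∈ S <;> simp [hy1, _root_.restrict, h, ht, hb i]
        have h1 : l2norm y1 ≤ Real.sqrt s * t :=
          l2_le_sqrt_mul y1 t ht
            (le_of_le_of_eq (Finset.card_le_card (supp_restrict S y)) hScard) hby1
        -- √s * t' ≤ (√s)⁻¹ * l1norm y1
        have hst : 0 < Real.sqrt s := Real.sqrt_pos.mpr (by exact_mod_cast hs)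
        have hl1y1 : (s : ℝ) * t' ≤ l1norm y1 := by
          have : l1norm y1 = ∑ i ∈ S, |y i| := by
            rw [l1norm]
            rw [← Finset.sum_subset (Finset.subset_univ S)]
            · apply Finset.sum_congr rfl
              intro i hi; simp [hy1, _root_.restrict, hi]
            · intro i _ hi; simp [hy1, _root_.restrict, hi]
          rw [this]
          calc (s : ℝ) * t' = ∑ _i ∈ S, t' := by
                rw [Finset.sum_const, nsmul_eq_mul, hScard]
            _ ≤ ∑ i ∈ S, |y i| := Finset.sum_le_sum fun i hi => hamin i hi
        have h2 : Real.sqrt s * t' ≤ (Real.sqrt s)⁻¹ * l1norm y1 := by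
          have hss : Real.sqrt s * Real.sqrt s = (s:ℝ) := Real.mul_self_sqrt (Nat.cast_nonneg s)
          rw [inv_mul_eq_div, le_div_iff₀ hst]
          calc Real.sqrt s * t' * Real.sqrt s = (s:ℝ) * t' := by rw [mul_comm _ (Real.sqrt s), ← mul_assoc, hss]
            _ ≤ l1norm y1 := hl1y1
        -- l1norm y = l1norm y1 + l1norm y2
        have hl1 : l1norm y = l1norm y1 + l1norm y2 := by
          rw [l1norm, l1norm, l1norm, ← Finset.sum_add_distrib]
          apply Finset.sum_congr rfl
          intro i _
          by_cases h : i ∈ S <;> simp [hy1, hy2, _root_.restrict, h]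
        calc l2norm y1 + (List.map l2norm L2).sum
            ≤ Real.sqrt s * t + (Real.sqrt s * t' + (Real.sqrt s)⁻¹ * l1norm y2) := by
              apply add_le_add h1
              calc (List.map l2norm L2).sum ≤ Real.sqrt s * t' + (Real.sqrt s)⁻¹ * l1norm y2 := hL2bound
                _ = _ := rfl
          _ ≤ Real.sqrt s * t + ((Real.sqrt s)⁻¹ * l1norm y1 + (Real.sqrt s)⁻¹ * l1norm y2) := by
              linarith
          _ = Real.sqrt s * t + (Real.sqrt s)⁻¹ * l1norm y := by rw [hl1]; ring

lemma l2_neg {k : ℕ} (x : Fin k → ℝ) : l2norm (-x) = l2norm x := by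
  unfold l2norm; congr 1
  exact Finset.sum_congr rfl fun i _ => by simp [neg_pow]

lemma ip_add_left {k : ℕ} (x y z : Fin k → ℝ) : ip (x + y) z = ip x z + ip y z := by
  simp [ip, add_mul, Finset.sum_add_distrib]

lemma ip_add_right {k : ℕ} (x y z : Fin k → ℝ) : ip x (y + z) = ip x y + ip x z := by
  simp [ip, mul_add, Finset.sum_add_distrib]

lemma ip_neg_left {k : ℕ} (x z : Fin k → ℝ) : ip (-x) z = - ip x z := by
  simp [ip, Finset.sum_neg_distrib]

lemma ip_self {k : ℕ} (x : Fin k → ℝ) : ip x x = (l2norm x)^2 := by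
  rw [l2_sq, ip]
  exact Finset.sum_congr rfl fun i _ => (sq (x i)).symm

lemma ip_list {n m : ℕ} (B : Matrix (Fin n) (Fin m) ℝ) (p : Fin n → ℝ) :
    ∀ L : List (Fin m → ℝ),
      ip p (B.mulVec L.sum) = (L.map fun z => ip p (B.mulVec z)).sum := by
  intro L
  induction L with
  | nil => simp [ip, Matrix.mulVec_zero]
  | cons z L ih => rw [List.sum_cons, Matrix.mulVec_add, ip_add_right, List.map_cons,
      List.sum_cons, ih]

lemma l2_mono {k : ℕ} (u v : Fin k → ℝ) (h : ∀ i, (u i)^2 ≤ (v i)^2) :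
    l2norm u ≤ l2norm v :=
  Real.sqrt_le_sqrt (Finset.sum_le_sum fun i _ => h i)

lemma l1_le_sqrt {k s : ℕ} (v : Fin k → ℝ) (h : (support v).card ≤ s) :
    l1norm v ≤ Real.sqrt s * l2norm v := by
  apply le_of_sq_le_sq (l1_nonneg v) (mul_nonneg (Real.sqrt_nonneg _) (l2_nonneg v))
  rw [mul_pow, Real.sq_sqrt (Nat.cast_nonneg s), l2_sq]
  have h1 : l1norm v = ∑ i ∈ support v, |v i| := by
    rw [l1norm, ← Finset.sum_subset (Finset.subset_univ (support v))]
    intro i _ hi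
    rw [mem_support_iff, not_not] at hi
    simp [hi]
  have h2 : ∑ i, (v i)^2 = ∑ i ∈ support v, (v i)^2 := by
    refine (Finset.sum_subset (Finset.subset_univ _) ?_).symm
    intro i _ hi
    rw [mem_support_iff, not_not] at hi
    simp [hi]
  rw [h1, h2]
  have hCS := Finset.sum_mul_sq_le_sq_mul_sq (support v) (fun _ => (1:ℝ)) (fun i => |v i|)
  simp only [one_mul, one_pow, Finset.sum_const, nsmul_eq_mul, mul_one, sq_abs] at hCS
  calc (∑ i ∈ support v, |v i|)^2 ≤ ((support v).card : ℝ) * ∑ i ∈ support v, (v i)^2 := hCS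
    _ ≤ (s:ℝ) * ∑ i ∈ support v, (v i)^2 := by
        apply mul_le_mul_of_nonneg_right _ (Finset.sum_nonneg fun i _ => sq_nonneg _)
        exact_mod_cast h

lemma perk {n m s : ℕ} (hs : 1 ≤ s) {B : Matrix (Fin n) (Fin m) ℝ} {δ : ℝ}
    (hB : RIP (2*s) δ B) (hδ0 : 0 ≤ δ) (hδ1 : δ < 1)
    (ub us : Fin m → ℝ) (hsp : Sparse s ub)
    (T1 : Finset (Fin m)) (hT1sub : T1 ⊆ (support ub)ᶜ) (hT1card : T1.card = s)
    (hT1max : ∀ i ∈ T1, ∀ j ∈ (support ub)ᶜ \ T1, |(us - ub) j| ≤ |(us - ub) i|)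
    (c ε : ℝ) (hc : 0 ≤ c) (hε : 0 ≤ ε)
    (hBh : l2norm (B.mulVec (us - ub)) ≤ 2*c*ε) :
    l2norm (_root_.restrict (support ub ∪ T1) (us - ub)) ≤
      2 * Real.sqrt (1+δ) / (1-δ) * c * ε +
      (Real.sqrt 2 * δ / (1-δ)) *
        ((Real.sqrt s)⁻¹ * l1norm (_root_.restrict ((support ub)ᶜ) (us - ub))) := by
  have h1δ : 0 < 1 - δ := by linarith
  set hk : Fin m → ℝ := us - ub with hhk
  set T0 := support ub with hT0d
  set T01 := T0 ∪ T1 with hT01d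
  set x01 := _root_.restrict T01 hk with hx01d
  set x0 := _root_.restrict T0 hk with hx0d
  set x1 := _root_.restrict T1 hk with hx1d
  set Qe := (Real.sqrt s)⁻¹ * l1norm (_root_.restrict T0ᶜ hk) with hQed
  set y : Fin m → ℝ := fun i => if i ∈ T01 then 0 else hk i with hyd
  have hdisj : ∀ i ∈ T1, i ∉ T0 := fun i h1 => Finset.mem_compl.mp (hT1sub h1)
  have hT0card : T0.card ≤ s := hsp
  have hsx0 : Sparse s x0 := sparse_of_supp_subset (supp_restrict _ _) hT0card
  have hsx1 : Sparse s x1 := sparse_of_supp_subset (supp_restrict _ _) (le_of_eq hT1card)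
  have hsx01 : Sparse (2*s) x01 := by
    apply sparse_of_supp_subset (supp_restrict _ _)
    calc T01.card ≤ T0.card + T1.card := Finset.card_union_le _ _
      _ ≤ s + s := add_le_add hT0card (le_of_eq hT1card)
      _ = 2*s := (two_mul s).symm
  have hx01split : x01 = x0 + x1 := by
    funext i
    by_cases h0 : i ∈ T0 <;> by_cases h1 : i ∈ T1
    · exact absurd h0 (hdisj i h1)
    all_goals
      simp [hx01d, hx0d, hx1d, _root_.restrict, hT01d, Finset.mem_union, h0, h1]
  have hsplit : hk = x01 + y := by
    funext i
    by_cases h : i ∈ T01 <;> simp [hx01d, hyd, _root_.restrict, h]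
  have hT1ne : T1.Nonempty := Finset.card_pos.mp (by rw [hT1card]; omega)
  obtain ⟨a, haT1, hamin⟩ := Finset.exists_min_image T1 (fun i => |hk i|) hT1ne
  set t := |hk a| with htd
  have ht0 : 0 ≤ t := abs_nonneg _
  have hby : ∀ i, |y i| ≤ t := by
    intro i
    by_cases h : i ∈ T01
    · simp [hyd, h, ht0]
    · have hi : i ∈ T0ᶜ \ T1 := by
        rw [hT01d, Finset.mem_union] at h
        push_neg at h
        exact Finset.mem_sdiff.mpr ⟨Finset.mem_compl.mpr h.1, h.2⟩
      have h2 := hT1max a haT1 i hi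
      simpa [hyd, h, htd] using h2
  obtain ⟨L, hLp, hLsum, hLbound⟩ := decomp s hs (support y).card y t le_rfl ht0 hby
  have hsqs : 0 < Real.sqrt s := Real.sqrt_pos.mpr (by exact_mod_cast Nat.lt_of_lt_of_le Nat.zero_lt_one hs)
  have hl1split : l1norm (_root_.restrict T0ᶜ hk) = l1norm x1 + l1norm y := by
    rw [l1norm, l1norm, l1norm, ← Finset.sum_add_distrib]
    apply Finset.sum_congr rfl
    intro i _
    by_cases h0 : i ∈ T0 <;> by_cases h1 : i ∈ T1
    · exact absurd h0 (hdisj i h1)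
    all_goals
      simp [_root_.restrict, hx1d, hyd, hT01d, Finset.mem_union, Finset.mem_compl, h0, h1]
  have hl1x1 : (s:ℝ) * t ≤ l1norm x1 := by
    have he : l1norm x1 = ∑ i ∈ T1, |hk i| := by
      rw [l1norm, ← Finset.sum_subset (Finset.subset_univ T1)]
      · exact Finset.sum_congr rfl fun i hi => by simp [hx1d, _root_.restrict, hi]
      · intro i _ hi; simp [hx1d, _root_.restrict, hi]
    rw [he]
    calc (s:ℝ)*t = ∑ _i ∈ T1, t := by rw [Finset.sum_const, nsmul_eq_mul, hT1card]
      _ ≤ ∑ i ∈ T1, |hk i| := Finset.sum_le_sum fun i hi => hamin i hi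
  have hLb2 : (L.map l2norm).sum ≤ Qe := by
    have h2 : Real.sqrt s * t ≤ (Real.sqrt s)⁻¹ * l1norm x1 := by
      rw [inv_mul_eq_div, le_div_iff₀ hsqs]
      calc Real.sqrt s * t * Real.sqrt s = (s:ℝ)*t := by
            rw [mul_comm _ (Real.sqrt s), ← mul_assoc, Real.mul_self_sqrt (Nat.cast_nonneg s)]
        _ ≤ l1norm x1 := hl1x1
    rw [hQed, hl1split, mul_add]
    linarith [hLbound]
  set p := B.mulVec x01 with hpd
  have hBh' : B.mulVec hk = p + B.mulVec y := by
    rw [hsplit, Matrix.mulVec_add]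
  have hiph : ip p (B.mulVec hk) = (l2norm p)^2 + ip p (B.mulVec y) := by
    rw [hBh', ip_add_right, ip_self]
  have hB01 := hB x01 hsx01
  have hBp : l2norm p ≤ Real.sqrt (1+δ) * l2norm x01 := by
    apply le_of_sq_le_sq (l2_nonneg _) (mul_nonneg (Real.sqrt_nonneg _) (l2_nonneg _))
    rw [mul_pow, Real.sq_sqrt (by linarith : (0:ℝ) ≤ 1+δ)]
    exact hB01.2
  have hip1 : ip p (B.mulVec hk) ≤ Real.sqrt (1+δ) * l2norm x01 * (2*c*ε) := by
    calc ip p (B.mulVec hk) ≤ l2norm p * l2norm (B.mulVec hk) := ip_le _ _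
      _ ≤ (Real.sqrt (1+δ) * l2norm x01) * (2*c*ε) :=
          mul_le_mul hBp hBh (l2_nonneg _) (mul_nonneg (Real.sqrt_nonneg _) (l2_nonneg _))
  have hzb : ∀ z ∈ L, -ip p (B.mulVec z) ≤ δ * (l2norm x0 + l2norm x1) * l2norm z := by
    intro z hz
    obtain ⟨hzs, hzsupp⟩ := hLp z hz
    have hzT : ∀ i, z i ≠ 0 → i ∉ T01 := by
      intro i hzi
      have h3 := hzsupp i hzi
      by_contra hmem
      simp [hyd, hmem] at h3
    have hd0 : ∀ i, (-x0) i = 0 ∨ z i = 0 := by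
      intro i
      by_cases hzi : z i = 0
      · exact Or.inr hzi
      · left
        have hiT := hzT i hzi
        have h4 : i ∉ T0 := fun h => hiT (hT01d ▸ Finset.mem_union_left _ h)
        simp [hx0d, _root_.restrict, h4]
    have hd1 : ∀ i, (-x1) i = 0 ∨ z i = 0 := by
      intro i
      by_cases hzi : z i = 0
      · exact Or.inr hzi
      · left
        have hiT := hzT i hzi
        have h4 : i ∉ T1 := fun h => hiT (hT01d ▸ Finset.mem_union_right _ h)
        simp [hx1d, _root_.restrict, h4]
    have hsupneg : ∀ (w : Fin m → ℝ), support (-w) ⊆ support w := by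
      intro w i hi
      rw [mem_support_iff] at hi ⊢
      simpa using hi
    have hsnx0 : Sparse s (-x0) := sparse_of_supp_subset (hsupneg x0) hsx0
    have hsnx1 : Sparse s (-x1) := sparse_of_supp_subset (hsupneg x1) hsx1
    have hr0 := ro hB hsnx0 hzs hd0
    have hr1 := ro hB hsnx1 hzs hd1
    rw [Matrix.mulVec_neg, ip_neg_left, l2_neg] at hr0 hr1
    have hps : p = B.mulVec x0 + B.mulVec x1 := by
      rw [hpd, hx01split, Matrix.mulVec_add]
    have he2 : -ip p (B.mulVec z)
        = -ip (B.mulVec x0) (B.mulVec z) + -ip (B.mulVec x1) (B.mulVec z) := by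
      rw [hps, ip_add_left]; ring
    rw [he2]
    calc -ip (B.mulVec x0) (B.mulVec z) + -ip (B.mulVec x1) (B.mulVec z)
        ≤ δ * l2norm x0 * l2norm z + δ * l2norm x1 * l2norm z := add_le_add hr0 hr1
      _ = δ * (l2norm x0 + l2norm x1) * l2norm z := by ring
  have hx0x1 : l2norm x0 + l2norm x1 ≤ Real.sqrt 2 * l2norm x01 := by
    apply le_of_sq_le_sq (add_nonneg (l2_nonneg _) (l2_nonneg _))
      (mul_nonneg (Real.sqrt_nonneg _) (l2_nonneg _))
    rw [mul_pow, Real.sq_sqrt (by norm_num : (0:ℝ) ≤ 2)]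
    have hsum : (l2norm x0)^2 + (l2norm x1)^2 = (l2norm x01)^2 := by
      rw [l2_sq, l2_sq, l2_sq, ← Finset.sum_add_distrib]
      apply Finset.sum_congr rfl
      intro i _
      by_cases h0 : i ∈ T0 <;> by_cases h1 : i ∈ T1
      · exact absurd h0 (hdisj i h1)
      all_goals
        simp [hx0d, hx1d, hx01d, _root_.restrict, hT01d, Finset.mem_union, h0, h1]
    nlinarith [sq_nonneg (l2norm x0 - l2norm x1)]
  have hLnonneg : 0 ≤ (L.map l2norm).sum := by
    apply List.sum_nonneg
    intro x hx
    obtain ⟨z, _, rfl⟩ := List.mem_map.mp hx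
    exact l2_nonneg z
  have hip2 : -ip p (B.mulVec y) ≤ δ * Real.sqrt 2 * l2norm x01 * Qe := by
    have hy1 : ip p (B.mulVec y) = (L.map fun z => ip p (B.mulVec z)).sum := by
      rw [← hLsum, ip_list]
    have hneg : (L.map fun z => -ip p (B.mulVec z)).sum
        = -(L.map fun z => ip p (B.mulVec z)).sum := by
      rw [show (fun z => -ip p (B.mulVec z)) = (fun z => (-1 : ℝ) * ip p (B.mulVec z)) from
        funext fun z => by ring, List.sum_map_mul_left]
      ring
    have hmul : (L.map fun z => (δ * (l2norm x0 + l2norm x1)) * l2norm z).sum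
        = δ * (l2norm x0 + l2norm x1) * (L.map l2norm).sum := List.sum_map_mul_left L l2norm _
    have hle : (L.map fun z => -ip p (B.mulVec z)).sum
        ≤ (L.map fun z => (δ * (l2norm x0 + l2norm x1)) * l2norm z).sum := by
      apply List.sum_le_sum
      intro z hz
      simpa [mul_assoc] using hzb z hz
    rw [hy1, ← hneg]
    calc (L.map fun z => -ip p (B.mulVec z)).sum
        ≤ δ * (l2norm x0 + l2norm x1) * (L.map l2norm).sum := by rw [← hmul]; exact hle
      _ ≤ δ * (Real.sqrt 2 * l2norm x01) * (L.map l2norm).sum := by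
          apply mul_le_mul_of_nonneg_right _ hLnonneg
          exact mul_le_mul_of_nonneg_left hx0x1 hδ0
      _ ≤ δ * (Real.sqrt 2 * l2norm x01) * Qe := by
          apply mul_le_mul_of_nonneg_left hLb2
          exact mul_nonneg hδ0 (mul_nonneg (Real.sqrt_nonneg 2) (l2_nonneg _))
      _ = δ * Real.sqrt 2 * l2norm x01 * Qe := by ring
  have hRHSeq : (1-δ) * (2 * Real.sqrt (1+δ) / (1-δ) * c * ε + (Real.sqrt 2 * δ / (1-δ)) * Qe)
      = Real.sqrt (1+δ) * (2*c*ε) + δ * Real.sqrt 2 * Qe := by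
    field_simp
  have hmain : (1-δ) * (l2norm x01)^2
      ≤ l2norm x01 * ((1-δ) * (2 * Real.sqrt (1+δ) / (1-δ) * c * ε
          + (Real.sqrt 2 * δ / (1-δ)) * Qe)) := by
    calc (1-δ) * (l2norm x01)^2 ≤ (l2norm p)^2 := hB01.1
      _ = ip p (B.mulVec hk) - ip p (B.mulVec y) := by rw [hiph]; ring
      _ ≤ Real.sqrt (1+δ) * l2norm x01 * (2*c*ε) + δ * Real.sqrt 2 * l2norm x01 * Qe := by
          linarith [hip1, hip2]
      _ = l2norm x01 * (Real.sqrt (1+δ) * (2*c*ε) + δ * Real.sqrt 2 * Qe) := by ring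
      _ = _ := by rw [hRHSeq]
  rcases eq_or_lt_of_le (l2_nonneg x01) with h0 | h0
  · rw [← h0]
    have hQe : 0 ≤ Qe := by
      rw [hQed]
      exact mul_nonneg (inv_nonneg.mpr (Real.sqrt_nonneg _)) (l1_nonneg _)
    have ht1 : 0 ≤ 2 * Real.sqrt (1+δ) / (1-δ) * c * ε := by positivity
    have ht2 : 0 ≤ Real.sqrt 2 * δ / (1-δ) * Qe :=
      mul_nonneg (div_nonneg (mul_nonneg (Real.sqrt_nonneg 2) hδ0) h1δ.le) hQe
    linarith
  · have h2 : ((1-δ) * l2norm x01) * l2norm x01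
        ≤ ((1-δ) * (2 * Real.sqrt (1+δ) / (1-δ) * c * ε + (Real.sqrt 2 * δ / (1-δ)) * Qe))
          * l2norm x01 := by
      calc ((1-δ) * l2norm x01) * l2norm x01 = (1-δ) * (l2norm x01)^2 := by ring
        _ ≤ l2norm x01 * ((1-δ) * (2 * Real.sqrt (1+δ) / (1-δ) * c * ε
              + (Real.sqrt 2 * δ / (1-δ)) * Qe)) := hmain
        _ = _ := by ring
    have h3 := le_of_mul_le_mul_right h2 h0
    exact le_of_mul_le_mul_left h3 h1δ

end S7

/-- Lemma 4 of the paper. -/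
theorem stmt7 {n m K s : ℕ} (hs : 1 ≤ s)
    (B : Matrix (Fin n) (Fin m) ℝ)
    (δ : ℝ) (hδ : δ < Real.sqrt 2 - 1) (hB : RIP (2 * s) δ B)
    (ubar ustar : Fin K → Fin m → ℝ)
    (hsp : ∀ k, Sparse s (ubar k))
    (hopt : ∑ k, l1norm (ustar k) ≤ ∑ k, l1norm (ubar k))
    (T1 : Fin K → Finset (Fin m))
    (hcard : ∀ k, s ≤ ((support (ubar k))ᶜ : Finset (Fin m)).card)
    (hT1sub : ∀ k, T1 k ⊆ (support (ubar k))ᶜ)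
    (hT1card : ∀ k, (T1 k).card = s)
    (hT1max : ∀ k, ∀ i ∈ T1 k, ∀ j ∈ (support (ubar k))ᶜ \ T1 k,
      |(ustar k - ubar k) j| ≤ |(ustar k - ubar k) i|)
    (c ε : ℝ) (hc : 0 ≤ c) (hε : 0 ≤ ε)
    (hBh : ∀ k, l2norm (B.mulVec (ustar k - ubar k)) ≤ 2 * c * ε) :
    ∑ k, l2norm (restrict (support (ubar k) ∪ T1 k) (ustar k - ubar k)) ≤
      (K : ℝ) * (1 - Real.sqrt 2 * δ / (1 - δ))⁻¹ *
        (2 * Real.sqrt (1 + δ) / (1 - δ)) * c * ε := by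
  rcases Nat.eq_zero_or_pos K with hK | hK
  · subst hK
    simp
  have hm : 0 < m := by
    have h1 := hcard ⟨0, hK⟩
    have h2 : ((support (ubar ⟨0, hK⟩))ᶜ : Finset (Fin m)).card ≤ m := by
      calc ((support (ubar ⟨0, hK⟩))ᶜ : Finset (Fin m)).card
          ≤ (Finset.univ : Finset (Fin m)).card := Finset.card_le_card (Finset.subset_univ _)
        _ = m := by simp
    omega
  have hδ0 : 0 ≤ δ := by
    set e : Fin m → ℝ := fun i => if i = ⟨0, hm⟩ then 1 else 0 with hed
    have hspe : Sparse (2*s) e := by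
      apply S7.sparse_of_supp_subset (T := {(⟨0, hm⟩ : Fin m)})
      · intro i hi
        rw [S7.mem_support_iff] at hi
        rw [Finset.mem_singleton]
        by_contra h
        simp [hed, h] at hi
      · simp
        omega
    have he2 : (l2norm e)^2 = 1 := by
      rw [S7.l2_sq]
      rw [Finset.sum_eq_single (⟨0, hm⟩ : Fin m)]
      · simp [hed]
      · intro b _ hb
        simp [hed, hb]
      · intro h
        exact absurd (Finset.mem_univ _) h
    have h3 := hB e hspe
    rw [he2] at h3
    nlinarith [h3.1, h3.2]
  have hsqrt2 : (Real.sqrt 2)^2 = 2 := Real.sq_sqrt (by norm_num)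
  have hsqrt2nn : 0 ≤ Real.sqrt 2 := Real.sqrt_nonneg 2
  have hδ1 : δ < 1 := by nlinarith [hδ]
  have h1δ : 0 < 1 - δ := by linarith
  have hρ1 : Real.sqrt 2 * δ / (1 - δ) < 1 := by
    rw [div_lt_one h1δ]
    nlinarith [hδ]
  have hρ0 : 0 ≤ Real.sqrt 2 * δ / (1 - δ) := div_nonneg (mul_nonneg hsqrt2nn hδ0) h1δ.le
  have hsqs : 0 < Real.sqrt s :=
    Real.sqrt_pos.mpr (by exact_mod_cast Nat.lt_of_lt_of_le Nat.zero_lt_one hs)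
  have key : ∀ k, l2norm (_root_.restrict (support (ubar k) ∪ T1 k) (ustar k - ubar k)) ≤
      2 * Real.sqrt (1+δ) / (1-δ) * c * ε +
      (Real.sqrt 2 * δ / (1-δ)) *
        ((Real.sqrt s)⁻¹ * l1norm (_root_.restrict ((support (ubar k))ᶜ) (ustar k - ubar k))) :=
    fun k => S7.perk hs hB hδ0 hδ1 (ubar k) (ustar k) (hsp k) (T1 k) (hT1sub k)
      (hT1card k) (hT1max k) c ε hc hε (hBh k)
  have step1 : ∑ k, l1norm (_root_.restrict ((support (ubar k))ᶜ) (ustar k - ubar k)) ≤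
      ∑ k, l1norm (_root_.restrict (support (ubar k)) (ustar k - ubar k)) := by
    have hptk : ∀ k, l1norm (_root_.restrict ((support (ubar k))ᶜ) (ustar k - ubar k))
        - l1norm (_root_.restrict (support (ubar k)) (ustar k - ubar k)) + l1norm (ubar k)
        ≤ l1norm (ustar k) := by
      intro k
      have heq : l1norm (_root_.restrict ((support (ubar k))ᶜ) (ustar k - ubar k))
          - l1norm (_root_.restrict (support (ubar k)) (ustar k - ubar k)) + l1norm (ubar k)
          = ∑ i, (|_root_.restrict ((support (ubar k))ᶜ) (ustar k - ubar k) i|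
              - |_root_.restrict (support (ubar k)) (ustar k - ubar k) i| + |ubar k i|) := by
        rw [l1norm, l1norm, l1norm, Finset.sum_add_distrib, Finset.sum_sub_distrib]
      rw [heq, l1norm]
      apply Finset.sum_le_sum
      intro i _
      by_cases h0 : i ∈ support (ubar k)
      · have hc0 : i ∉ ((support (ubar k))ᶜ : Finset (Fin m)) := by simp [h0]
        simp only [_root_.restrict, if_pos h0, if_neg hc0, abs_zero]
        have hrw : ubar k i = ustar k i - (ustar k - ubar k) i := by
          simp [Pi.sub_apply]
        have habs : |ubar k i| ≤ |ustar k i| + |(ustar k - ubar k) i| := by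
          rw [hrw]
          exact abs_sub _ _
        linarith
      · have hc0 : i ∈ ((support (ubar k))ᶜ : Finset (Fin m)) := by simp [h0]
        have hub0 : ubar k i = 0 := by
          by_contra h
          exact h0 (S7.mem_support_iff.mpr h)
        simp [_root_.restrict, if_pos hc0, if_neg h0, hub0, Pi.sub_apply]
    have hsumle := Finset.sum_le_sum (fun k (_ : k ∈ Finset.univ) => hptk k)
    rw [Finset.sum_add_distrib, Finset.sum_sub_distrib] at hsumle
    linarith [hopt]
  have step2 : ∀ k, (Real.sqrt s)⁻¹ * l1norm (_root_.restrict (support (ubar k)) (ustar k - ubar k))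
      ≤ l2norm (_root_.restrict (support (ubar k) ∪ T1 k) (ustar k - ubar k)) := by
    intro k
    have hl1 : l1norm (_root_.restrict (support (ubar k)) (ustar k - ubar k))
        ≤ Real.sqrt s * l2norm (_root_.restrict (support (ubar k)) (ustar k - ubar k)) := by
      apply S7.l1_le_sqrt
      exact le_trans (Finset.card_le_card (S7.supp_restrict _ _)) (hsp k)
    have hmono : l2norm (_root_.restrict (support (ubar k)) (ustar k - ubar k))
        ≤ l2norm (_root_.restrict (support (ubar k) ∪ T1 k) (ustar k - ubar k)) := by
      apply S7.l2_mono
      intro i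
      by_cases h : i ∈ support (ubar k)
      · simp [_root_.restrict, h, Finset.mem_union]
      · simp only [_root_.restrict, if_neg h]
        have h5 := sq_nonneg (if i ∈ support (ubar k) ∪ T1 k then (ustar k - ubar k) i else 0)
        simpa using h5
    calc (Real.sqrt s)⁻¹ * l1norm (_root_.restrict (support (ubar k)) (ustar k - ubar k))
        ≤ (Real.sqrt s)⁻¹ * (Real.sqrt s * l2norm (_root_.restrict (support (ubar k)) (ustar k - ubar k))) :=
          mul_le_mul_of_nonneg_left hl1 (inv_nonneg.mpr hsqs.le)
      _ = l2norm (_root_.restrict (support (ubar k)) (ustar k - ubar k)) := by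
          rw [← mul_assoc, inv_mul_cancel₀ (ne_of_gt hsqs), one_mul]
      _ ≤ _ := hmono
  set S := ∑ k, l2norm (_root_.restrict (support (ubar k) ∪ T1 k) (ustar k - ubar k)) with hSd
  have hsum : S ≤ (K:ℝ) * (2*Real.sqrt (1+δ)/(1-δ)*c*ε) + (Real.sqrt 2 * δ/(1-δ)) * S := by
    calc S ≤ ∑ k, (2*Real.sqrt (1+δ)/(1-δ)*c*ε + (Real.sqrt 2*δ/(1-δ)) *
          ((Real.sqrt s)⁻¹ * l1norm (_root_.restrict ((support (ubar k))ᶜ) (ustar k - ubar k)))) :=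
        Finset.sum_le_sum (fun k _ => key k)
      _ = (K:ℝ)*(2*Real.sqrt (1+δ)/(1-δ)*c*ε) + (Real.sqrt 2*δ/(1-δ)) *
          ∑ k, (Real.sqrt s)⁻¹ * l1norm (_root_.restrict ((support (ubar k))ᶜ) (ustar k - ubar k)) := by
        rw [Finset.sum_add_distrib, Finset.sum_const, Finset.card_univ, Fintype.card_fin,
          nsmul_eq_mul, ← Finset.mul_sum]
      _ ≤ (K:ℝ)*(2*Real.sqrt (1+δ)/(1-δ)*c*ε) + (Real.sqrt 2*δ/(1-δ)) * S := by
        apply add_le_add le_rfl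
        apply mul_le_mul_of_nonneg_left _ hρ0
        calc ∑ k, (Real.sqrt s)⁻¹ * l1norm (_root_.restrict ((support (ubar k))ᶜ) (ustar k - ubar k))
            = (Real.sqrt s)⁻¹ *
              ∑ k, l1norm (_root_.restrict ((support (ubar k))ᶜ) (ustar k - ubar k)) := by
              rw [Finset.mul_sum]
          _ ≤ (Real.sqrt s)⁻¹ *
              ∑ k, l1norm (_root_.restrict (support (ubar k)) (ustar k - ubar k)) :=
              mul_le_mul_of_nonneg_left step1 (inv_nonneg.mpr hsqs.le)
          _ = ∑ k, (Real.sqrt s)⁻¹ * l1norm (_root_.restrict (support (ubar k)) (ustar k - ubar k)) :=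
              (Finset.mul_sum _ _ _)
          _ ≤ S := Finset.sum_le_sum (fun k _ => step2 k)
  have h1ρ : 0 < 1 - Real.sqrt 2 * δ / (1-δ) := by linarith
  rw [show (K:ℝ) * (1 - Real.sqrt 2 * δ/(1-δ))⁻¹ * (2*Real.sqrt (1+δ)/(1-δ)) * c * ε
      = ((K:ℝ) * (2*Real.sqrt (1+δ)/(1-δ)*c*ε)) / (1 - Real.sqrt 2*δ/(1-δ)) by
    rw [div_eq_mul_inv]; ring]
  rw [le_div_iff₀ h1ρ]
  nlinarith [hsum]
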